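/- Assume uniform ellipticity: there is δ > 0 with vᵀΣv ≥ δ|v|² for all v ∈ ℝ^m. Then the functions (P₊,P₋) ↦ H*₊(P₊,P₋) and (P₊,P₋) ↦ H*₋(P₊,P₋) are real-valued on (0,∞)×(0,∞) and locally Lipschitz there: for every compact set K ⊂ (0,∞)×(0,∞) there is L > 0 such that |H*₊(P) − H*₊(P′)| ≤ L|P − P′| and |H*₋(P) − H*₋(P′)| ≤ L|P − P′| for all P, P′ ∈ K. -/

import Mathlib

open MeasureTheory Set

lemma aux_integrable {E : Type} [MeasurableSpace E] (ν : Measure E) [IsFiniteMeasure ν]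
    {f : E → ℝ} (hf : Measurable f) {c : ℝ} (h : ∀ e, |f e| ≤ c) : Integrable f ν :=
  (integrable_const c).mono' hf.aestronglyMeasurable
    (Filter.Eventually.of_forall fun e => by simpa [Real.norm_eq_abs] using h e)

lemma pt_min (x Pp Pm : ℝ) (hPp : 0 < Pp) (hPm : 0 < Pm) :
    min Pp Pm * x^2 ≤ Pp * ((max (1+x) 0)^2 - 1 - 2*x) + Pm * (max (-(1+x)) 0)^2 := by
  rcases le_total 0 (1+x) with h|h
  · rw [max_eq_left h, max_eq_right (by linarith)]
    have h1 : min Pp Pm ≤ Pp := min_le_left _ _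
    nlinarith [sq_nonneg x]
  · rw [max_eq_right h, max_eq_left (by linarith)]
    rcases le_total Pp Pm with hpm|hpm
    · rw [min_eq_left hpm]
      nlinarith [mul_nonneg (sub_nonneg.2 hpm) (sq_nonneg (1+x))]
    · rw [min_eq_right hpm]
      nlinarith [mul_nonneg (sub_nonneg.2 hpm) (show (0:ℝ) ≤ -1-2*x by linarith)]

lemma pt_f1_bound (x D : ℝ) (hx : |x| ≤ D) (hD : 0 ≤ D) :
    |(max (1+x) 0)^2 - 1 - 2*x| ≤ (1+D)^2 + 1 + 2*D := by
  have h1 : 0 ≤ max (1+x) 0 := le_max_right _ _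
  have h2 : max (1+x) 0 ≤ 1 + D := by
    apply max_le _ (by linarith)
    have := abs_le.mp hx
    linarith [this.2]
  have := abs_le.mp hx
  rw [abs_le]
  constructor <;> nlinarith

lemma pt_f2_bound (x D : ℝ) (hx : |x| ≤ D) (hD : 0 ≤ D) :
    |(max (-(1+x)) 0)^2| ≤ (1+D)^2 := by
  have h1 : 0 ≤ max (-(1+x)) 0 := le_max_right _ _
  have h2 : max (-(1+x)) 0 ≤ 1 + D := by
    apply max_le _ (by linarith)
    have := abs_le.mp hx
    linarith [this.1]
  rw [abs_of_nonneg (by positivity)]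
  nlinarith

lemma sInf_image_trunc {α : Type*} (f : α → ℝ) (S T : Set α) (hTS : T ⊆ S)
    (hbdd : BddBelow (f '' S)) (hT : T.Nonempty)
    (hdom : ∀ v ∈ S, ∃ u ∈ T, f u ≤ f v) : sInf (f '' S) = sInf (f '' T) := by
  apply le_antisymm
  · exact csInf_le_csInf hbdd (hT.image f) (image_mono hTS)
  · apply le_csInf ((hT.mono hTS).image f)
    rintro y ⟨v, hv, rfl⟩
    obtain ⟨u, hu, hle⟩ := hdom v hv
    exact le_trans (csInf_le (hbdd.mono (image_mono hTS)) ⟨u, hu, rfl⟩) hle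

lemma sInf_sub_sInf_le {α : Type*} (f g : α → ℝ) (T : Set α) (hT : T.Nonempty)
    (hf : BddBelow (f '' T)) (c : ℝ) (h : ∀ v ∈ T, |f v - g v| ≤ c) :
    sInf (f '' T) - sInf (g '' T) ≤ c := by
  have h1 : sInf (f '' T) - c ≤ sInf (g '' T) := by
    apply le_csInf (hT.image g)
    rintro y ⟨v, hv, rfl⟩
    have h2 := csInf_le hf ⟨v, hv, rfl⟩
    have h3 := (abs_le.mp (h v hv)).2
    linarith
  linarith

lemma abs_sInf_sub_sInf_le {α : Type*} (f g : α → ℝ) (T : Set α) (hT : T.Nonempty)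
    (hf : BddBelow (f '' T)) (hg : BddBelow (g '' T)) (c : ℝ)
    (h : ∀ v ∈ T, |f v - g v| ≤ c) : |sInf (f '' T) - sInf (g '' T)| ≤ c := by
  rw [abs_le]
  constructor
  · have := sInf_sub_sInf_le g f T hT hg c (fun v hv => by rw [abs_sub_comm]; exact h v hv)
    linarith
  · exact sInf_sub_sInf_le f g T hT hf c h

section Aux
variable {E : Type} [MeasurableSpace E] {m n ℓ : ℕ}
  (μ : Fin m → ℝ) (σ : Matrix (Fin m) (Fin n) ℝ)
  (ν : Fin ℓ → Measure E) [∀ j, IsFiniteMeasure (ν j)]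
  (β : Fin ℓ → E → Fin m → ℝ)
  {C0 : ℝ}

lemma meas_x (hβm : ∀ j i, Measurable fun e => β j e i) (j : Fin ℓ) (v : Fin m → ℝ) :
    Measurable fun e => ∑ i, v i * β j e i :=
  Finset.measurable_sum _ fun i _ => (hβm j i).const_mul (v i)

lemma x_bound (hC : ∀ j e i, |β j e i| ≤ C0) (j : Fin ℓ) (v : Fin m → ℝ) (e : E) :
    |∑ i, v i * β j e i| ≤ (∑ i, |v i|) * C0 := by
  calc |∑ i, v i * β j e i| ≤ ∑ i, |v i * β j e i| := Finset.abs_sum_le_sum_abs _ _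
    _ ≤ ∑ i, |v i| * C0 := Finset.sum_le_sum fun i _ => by
        rw [abs_mul]
        exact mul_le_mul_of_nonneg_left (hC j e i) (abs_nonneg _)
    _ = (∑ i, |v i|) * C0 := by rw [Finset.sum_mul]

lemma int_f1 (hβm : ∀ j i, Measurable fun e => β j e i)
    (hC : ∀ j e i, |β j e i| ≤ C0) (h0C : 0 ≤ C0) (j : Fin ℓ) (v : Fin m → ℝ) :
    Integrable (fun e => (max (1 + ∑ i, v i * β j e i) 0)^2 - 1 - 2 * ∑ i, v i * β j e i) (ν j) := by
  have hx := meas_x β hβm j v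
  apply aux_integrable (ν j)
    ((((measurable_const.add hx).max measurable_const).pow_const 2).sub measurable_const |>.sub
      (hx.const_mul 2))
  intro e
  exact pt_f1_bound _ _ (x_bound β hC j v e)
    (mul_nonneg (Finset.sum_nonneg fun i _ => abs_nonneg _) h0C)

lemma int_f2 (hβm : ∀ j i, Measurable fun e => β j e i)
    (hC : ∀ j e i, |β j e i| ≤ C0) (h0C : 0 ≤ C0) (j : Fin ℓ) (v : Fin m → ℝ) :
    Integrable (fun e => (max (-(1 + ∑ i, v i * β j e i)) 0)^2) (ν j) := by
  have hx := meas_x β hβm j v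
  apply aux_integrable (ν j)
    (((measurable_const.add hx).neg.max measurable_const).pow_const 2)
  intro e
  exact pt_f2_bound _ _ (x_bound β hC j v e)
    (mul_nonneg (Finset.sum_nonneg fun i _ => abs_nonneg _) h0C)

lemma int_x2 (hβm : ∀ j i, Measurable fun e => β j e i)
    (hC : ∀ j e i, |β j e i| ≤ C0) (h0C : 0 ≤ C0) (j : Fin ℓ) (v : Fin m → ℝ) :
    Integrable (fun e => (∑ i, v i * β j e i)^2) (ν j) := by
  have hx := meas_x β hβm j v
  apply aux_integrable (ν j) (hx.pow_const 2)
  intro e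
  rw [abs_of_nonneg (sq_nonneg _)]
  calc (∑ i, v i * β j e i)^2 = |∑ i, v i * β j e i|^2 := (sq_abs _).symm
    _ ≤ ((∑ i, |v i|) * C0)^2 := by
        apply pow_le_pow_left₀ (abs_nonneg _) (x_bound β hC j v e)

lemma int_prod (hβm : ∀ j i, Measurable fun e => β j e i)
    (hC : ∀ j e i, |β j e i| ≤ C0) (h0C : 0 ≤ C0) (j : Fin ℓ) (i k : Fin m) :
    Integrable (fun e => β j e i * β j e k) (ν j) := by
  apply aux_integrable (ν j) ((hβm j i).mul (hβm j k))
  intro e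
  show |β j e i * β j e k| ≤ C0 * C0
  rw [abs_mul]
  exact mul_le_mul (hC j e i) (hC j e k) (abs_nonneg _) h0C

end Aux
/-- The Hamiltonian `H₊(v, P₊, P₋)` (time-invariant coefficients). -/
noncomputable def Hplus {E : Type} [MeasurableSpace E] {m n ℓ : ℕ}
    (μ : Fin m → ℝ) (σ : Matrix (Fin m) (Fin n) ℝ)
    (ν : Fin ℓ → Measure E) (β : Fin ℓ → E → Fin m → ℝ)
    (v : Fin m → ℝ) (Pp Pm : ℝ) : ℝ :=
  Pp * ∑ k, (∑ i, σ i k * v i) ^ 2 + 2 * Pp * ∑ i, μ i * v i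
    + ∑ j, ∫ e, (Pp * ((max (1 + ∑ i, v i * β j e i) 0) ^ 2
          - 1 - 2 * ∑ i, v i * β j e i)
        + Pm * (max (-(1 + ∑ i, v i * β j e i)) 0) ^ 2) ∂(ν j)

/-- The Hamiltonian `H₋(v, P₊, P₋)` (time-invariant coefficients). -/
noncomputable def Hminus {E : Type} [MeasurableSpace E] {m n ℓ : ℕ}
    (μ : Fin m → ℝ) (σ : Matrix (Fin m) (Fin n) ℝ)
    (ν : Fin ℓ → Measure E) (β : Fin ℓ → E → Fin m → ℝ)
    (v : Fin m → ℝ) (Pp Pm : ℝ) : ℝ :=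
  Pm * ∑ k, (∑ i, σ i k * v i) ^ 2 - 2 * Pm * ∑ i, μ i * v i
    + ∑ j, ∫ e, (Pm * ((max (1 - ∑ i, v i * β j e i) 0) ^ 2
          - 1 + 2 * ∑ i, v i * β j e i)
        + Pp * (max (-(1 - ∑ i, v i * β j e i)) 0) ^ 2) ∂(ν j)

/-- `H*₊(P₊, P₋) = inf_{v ∈ ℝ^m₊} H₊(v, P₊, P₋)`. -/
noncomputable def HstarPlus {E : Type} [MeasurableSpace E] {m n ℓ : ℕ}
    (μ : Fin m → ℝ) (σ : Matrix (Fin m) (Fin n) ℝ)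
    (ν : Fin ℓ → Measure E) (β : Fin ℓ → E → Fin m → ℝ)
    (Pp Pm : ℝ) : ℝ :=
  sInf ((fun v => Hplus μ σ ν β v Pp Pm) '' {v : Fin m → ℝ | ∀ i, 0 ≤ v i})

/-- `H*₋(P₊, P₋) = inf_{v ∈ ℝ^m₊} H₋(v, P₊, P₋)`. -/
noncomputable def HstarMinus {E : Type} [MeasurableSpace E] {m n ℓ : ℕ}
    (μ : Fin m → ℝ) (σ : Matrix (Fin m) (Fin n) ℝ)
    (ν : Fin ℓ → Measure E) (β : Fin ℓ → E → Fin m → ℝ)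
    (Pp Pm : ℝ) : ℝ :=
  sInf ((fun v => Hminus μ σ ν β v Pp Pm) '' {v : Fin m → ℝ | ∀ i, 0 ≤ v i})

/-- `Σ = σσᵀ + ∑_j ∫_E β_j(e) β_j(e)ᵀ ν_j(de)`, defined entrywise. -/
noncomputable def SigmaMat {E : Type} [MeasurableSpace E] {m n ℓ : ℕ}
    (σ : Matrix (Fin m) (Fin n) ℝ) (ν : Fin ℓ → Measure E)
    (β : Fin ℓ → E → Fin m → ℝ) : Matrix (Fin m) (Fin m) ℝ :=
  Matrix.of fun i k => (∑ j', σ i j' * σ k j') + ∑ j, ∫ e, β j e i * β j e k ∂(ν j)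


noncomputable def Af {E : Type} [MeasurableSpace E] {m n ℓ : ℕ}
    (μ : Fin m → ℝ) (σ : Matrix (Fin m) (Fin n) ℝ)
    (ν : Fin ℓ → Measure E) (β : Fin ℓ → E → Fin m → ℝ) (v : Fin m → ℝ) : ℝ :=
  ∑ k, (∑ i, σ i k * v i) ^ 2 + 2 * ∑ i, μ i * v i
    + ∑ j, ∫ e, ((max (1 + ∑ i, v i * β j e i) 0) ^ 2 - 1 - 2 * ∑ i, v i * β j e i) ∂(ν j)

noncomputable def Bf {E : Type} [MeasurableSpace E] {m ℓ : ℕ}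
    (ν : Fin ℓ → Measure E) (β : Fin ℓ → E → Fin m → ℝ) (v : Fin m → ℝ) : ℝ :=
  ∑ j, ∫ e, (max (-(1 + ∑ i, v i * β j e i)) 0) ^ 2 ∂(ν j)

section Aux2
variable {E : Type} [MeasurableSpace E] {m n ℓ : ℕ}
  (μ : Fin m → ℝ) (σ : Matrix (Fin m) (Fin n) ℝ)
  (ν : Fin ℓ → Measure E) [∀ j, IsFiniteMeasure (ν j)]
  (β : Fin ℓ → E → Fin m → ℝ)
  {C0 : ℝ}

lemma int_sq_expand (hβm : ∀ j i, Measurable fun e => β j e i)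
    (hC : ∀ j e i, |β j e i| ≤ C0) (h0C : 0 ≤ C0) (j : Fin ℓ) (v : Fin m → ℝ) :
    ∫ e, (∑ i, v i * β j e i)^2 ∂(ν j)
      = ∑ i, ∑ k, v i * (∫ e, β j e i * β j e k ∂(ν j)) * v k := by
  have hpt : ∀ e, (∑ i, v i * β j e i)^2 = ∑ i, ∑ k, v i * (β j e i * β j e k) * v k := by
    intro e
    rw [sq, Finset.sum_mul_sum]
    exact Finset.sum_congr rfl fun i _ => Finset.sum_congr rfl fun k _ => by ring
  calc ∫ e, (∑ i, v i * β j e i)^2 ∂(ν j)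
      = ∫ e, ∑ i, ∑ k, v i * (β j e i * β j e k) * v k ∂(ν j) := by simp_rw [hpt]
    _ = ∑ i, ∫ e, ∑ k, v i * (β j e i * β j e k) * v k ∂(ν j) :=
        integral_finset_sum _ fun i _ => integrable_finset_sum _ fun k _ =>
          ((int_prod ν β hβm hC h0C j i k).const_mul _).mul_const _
    _ = ∑ i, ∑ k, ∫ e, v i * (β j e i * β j e k) * v k ∂(ν j) :=
        Finset.sum_congr rfl fun i _ => integral_finset_sum _ fun k _ =>
          ((int_prod ν β hβm hC h0C j i k).const_mul _).mul_const _
    _ = ∑ i, ∑ k, v i * (∫ e, β j e i * β j e k ∂(ν j)) * v k := by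
        refine Finset.sum_congr rfl fun i _ => Finset.sum_congr rfl fun k _ => ?_
        rw [integral_mul_const, integral_const_mul]

lemma quadform_eq (hβm : ∀ j i, Measurable fun e => β j e i)
    (hC : ∀ j e i, |β j e i| ≤ C0) (h0C : 0 ≤ C0) (v : Fin m → ℝ) :
    ∑ i, ∑ k, v i * SigmaMat σ ν β i k * v k
      = ∑ k, (∑ i, σ i k * v i)^2 + ∑ j, ∫ e, (∑ i, v i * β j e i)^2 ∂(ν j) := by
  have hσ : ∑ i, ∑ k, ∑ j', (σ i j' * v i) * (σ k j' * v k)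
      = ∑ k, (∑ i, σ i k * v i)^2 := by
    calc ∑ i, ∑ k, ∑ j', (σ i j' * v i) * (σ k j' * v k)
        = ∑ i, ∑ j', ∑ k, (σ i j' * v i) * (σ k j' * v k) :=
          Finset.sum_congr rfl fun i _ => Finset.sum_comm
      _ = ∑ j', ∑ i, ∑ k, (σ i j' * v i) * (σ k j' * v k) := Finset.sum_comm
      _ = ∑ j', (∑ i, σ i j' * v i) * (∑ k, σ k j' * v k) := by
          refine Finset.sum_congr rfl fun j' _ => ?_
          rw [Finset.sum_mul_sum]
      _ = ∑ k, (∑ i, σ i k * v i)^2 := Finset.sum_congr rfl fun k _ => by rw [sq]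
  have hβ : ∑ i, ∑ k, ∑ j, v i * (∫ e, β j e i * β j e k ∂(ν j)) * v k
      = ∑ j, ∫ e, (∑ i, v i * β j e i)^2 ∂(ν j) := by
    calc ∑ i, ∑ k, ∑ j, v i * (∫ e, β j e i * β j e k ∂(ν j)) * v k
        = ∑ i, ∑ j, ∑ k, v i * (∫ e, β j e i * β j e k ∂(ν j)) * v k :=
          Finset.sum_congr rfl fun i _ => Finset.sum_comm
      _ = ∑ j, ∑ i, ∑ k, v i * (∫ e, β j e i * β j e k ∂(ν j)) * v k := Finset.sum_comm
      _ = ∑ j, ∫ e, (∑ i, v i * β j e i)^2 ∂(ν j) :=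
          Finset.sum_congr rfl fun j _ => (int_sq_expand ν β hβm hC h0C j v).symm
  calc ∑ i, ∑ k, v i * SigmaMat σ ν β i k * v k
      = ∑ i, ∑ k, ((∑ j', (σ i j' * v i) * (σ k j' * v k))
          + ∑ j, v i * (∫ e, β j e i * β j e k ∂(ν j)) * v k) := by
        refine Finset.sum_congr rfl fun i _ => Finset.sum_congr rfl fun k _ => ?_
        simp only [SigmaMat, Matrix.of_apply]
        rw [mul_add, add_mul, Finset.mul_sum, Finset.mul_sum, Finset.sum_mul, Finset.sum_mul]
        congr 1
        all_goals exact Finset.sum_congr rfl fun j' _ => by ring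
    _ = (∑ i, ∑ k, ∑ j', (σ i j' * v i) * (σ k j' * v k))
          + ∑ i, ∑ k, ∑ j, v i * (∫ e, β j e i * β j e k ∂(ν j)) * v k := by
        rw [← Finset.sum_add_distrib]
        exact Finset.sum_congr rfl fun i _ => Finset.sum_add_distrib
    _ = _ := by rw [hσ, hβ]

end Aux2

section Aux3
variable {E : Type} [MeasurableSpace E] {m n ℓ : ℕ}
  (μ : Fin m → ℝ) (σ : Matrix (Fin m) (Fin n) ℝ)
  (ν : Fin ℓ → Measure E) [∀ j, IsFiniteMeasure (ν j)]
  (β : Fin ℓ → E → Fin m → ℝ)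
  {C0 : ℝ}

lemma Hplus_decomp (hβm : ∀ j i, Measurable fun e => β j e i)
    (hC : ∀ j e i, |β j e i| ≤ C0) (h0C : 0 ≤ C0) (v : Fin m → ℝ) (Pp Pm : ℝ) :
    Hplus μ σ ν β v Pp Pm = Pp * Af μ σ ν β v + Pm * Bf ν β v := by
  have hint : ∀ j : Fin ℓ,
      (∫ e, (Pp * ((max (1 + ∑ i, v i * β j e i) 0) ^ 2 - 1 - 2 * ∑ i, v i * β j e i)
        + Pm * (max (-(1 + ∑ i, v i * β j e i)) 0) ^ 2) ∂(ν j))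
      = Pp * (∫ e, ((max (1 + ∑ i, v i * β j e i) 0) ^ 2 - 1 - 2 * ∑ i, v i * β j e i) ∂(ν j))
        + Pm * ∫ e, (max (-(1 + ∑ i, v i * β j e i)) 0) ^ 2 ∂(ν j) := by
    intro j
    rw [integral_add ((int_f1 ν β hβm hC h0C j v).const_mul Pp)
      ((int_f2 ν β hβm hC h0C j v).const_mul Pm), integral_const_mul, integral_const_mul]
  unfold Hplus Af Bf
  rw [Finset.sum_congr rfl fun j _ => hint j, Finset.sum_add_distrib,
    ← Finset.mul_sum, ← Finset.mul_sum]
  ring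

lemma Hplus_ge (hβm : ∀ j i, Measurable fun e => β j e i)
    (hC : ∀ j e i, |β j e i| ≤ C0) (h0C : 0 ≤ C0) (v : Fin m → ℝ) {Pp Pm : ℝ}
    (hPp : 0 < Pp) (hPm : 0 < Pm) :
    min Pp Pm * (∑ k, (∑ i, σ i k * v i) ^ 2 + ∑ j, ∫ e, (∑ i, v i * β j e i)^2 ∂(ν j))
      + 2 * Pp * ∑ i, μ i * v i ≤ Hplus μ σ ν β v Pp Pm := by
  unfold Hplus
  have h1 : min Pp Pm * ∑ k, (∑ i, σ i k * v i) ^ 2 ≤ Pp * ∑ k, (∑ i, σ i k * v i) ^ 2 :=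
    mul_le_mul_of_nonneg_right (min_le_left _ _) (Finset.sum_nonneg fun k _ => sq_nonneg _)
  have h2 : ∀ j : Fin ℓ, min Pp Pm * ∫ e, (∑ i, v i * β j e i)^2 ∂(ν j)
      ≤ ∫ e, (Pp * ((max (1 + ∑ i, v i * β j e i) 0) ^ 2 - 1 - 2 * ∑ i, v i * β j e i)
        + Pm * (max (-(1 + ∑ i, v i * β j e i)) 0) ^ 2) ∂(ν j) := by
    intro j
    rw [← integral_const_mul]
    apply integral_mono ((int_x2 ν β hβm hC h0C j v).const_mul _)
      (((int_f1 ν β hβm hC h0C j v).const_mul Pp).add ((int_f2 ν β hβm hC h0C j v).const_mul Pm))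
    intro e
    exact pt_min _ _ _ hPp hPm
  have h3 : ∑ j, min Pp Pm * ∫ e, (∑ i, v i * β j e i)^2 ∂(ν j)
      ≤ ∑ j, ∫ e, (Pp * ((max (1 + ∑ i, v i * β j e i) 0) ^ 2 - 1 - 2 * ∑ i, v i * β j e i)
        + Pm * (max (-(1 + ∑ i, v i * β j e i)) 0) ^ 2) ∂(ν j) :=
    Finset.sum_le_sum fun j _ => h2 j
  rw [← Finset.mul_sum] at h3
  rw [mul_add]
  linarith

lemma Hplus_zero (Pp Pm : ℝ) :
    Hplus μ σ ν β (fun _ => 0) Pp Pm = 0 := by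
  unfold Hplus
  norm_num

lemma Hminus_eq_Hplus (v : Fin m → ℝ) (Pp Pm : ℝ) :
    Hminus μ σ ν β v Pp Pm
      = Hplus (fun i => -μ i) σ ν (fun j e i => -(β j e i)) v Pm Pp := by
  unfold Hplus Hminus
  have hx : ∀ (j : Fin ℓ) (e : E), ∑ i, v i * -(β j e i) = -∑ i, v i * β j e i := by
    intro j e
    rw [← Finset.sum_neg_distrib]
    exact Finset.sum_congr rfl fun i _ => by ring
  have hμ : ∑ i, (-μ i) * v i = -∑ i, μ i * v i := by
    rw [← Finset.sum_neg_distrib]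
    exact Finset.sum_congr rfl fun i _ => by ring
  rw [hμ]
  have hint : ∀ j : Fin ℓ,
      (∫ e, (Pm * ((max (1 - ∑ i, v i * β j e i) 0) ^ 2 - 1 + 2 * ∑ i, v i * β j e i)
        + Pp * (max (-(1 - ∑ i, v i * β j e i)) 0) ^ 2) ∂(ν j))
      = ∫ e, (Pm * ((max (1 + ∑ i, v i * -(β j e i)) 0) ^ 2 - 1 - 2 * ∑ i, v i * -(β j e i))
        + Pp * (max (-(1 + ∑ i, v i * -(β j e i))) 0) ^ 2) ∂(ν j) := by
    intro j
    refine integral_congr_ae (Filter.Eventually.of_forall fun e => ?_)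
    simp only [hx j e]
    ring_nf
  rw [Finset.sum_congr rfl fun j _ => hint j]
  ring

lemma SigmaMat_neg :
    SigmaMat σ ν (fun j e i => -(β j e i)) = SigmaMat σ ν β := by
  unfold SigmaMat
  ext i k
  simp [neg_mul_neg]

end Aux3

section Aux4
variable {E : Type} [MeasurableSpace E] {m n ℓ : ℕ}
  (μ : Fin m → ℝ) (σ : Matrix (Fin m) (Fin n) ℝ)
  (ν : Fin ℓ → Measure E) [∀ j, IsFiniteMeasure (ν j)]
  (β : Fin ℓ → E → Fin m → ℝ)
  {C0 : ℝ}

lemma Af_bound (hβm : ∀ j i, Measurable fun e => β j e i)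
    (hC : ∀ j e i, |β j e i| ≤ C0) (h0C : 0 ≤ C0) {R : ℝ} (hR : 0 ≤ R)
    (v : Fin m → ℝ) (hv : ∀ i, |v i| ≤ R) :
    |Af μ σ ν β v| ≤ (∑ k, (∑ i, |σ i k|) ^ 2) * R ^ 2 + 2 * (∑ i, |μ i|) * R
      + ((1 + (m : ℝ) * R * C0) ^ 2 + 1 + 2 * ((m : ℝ) * R * C0)) * ∑ j, (ν j Set.univ).toReal := by
  set D := (m : ℝ) * R * C0 with hDdef
  have hD : 0 ≤ D := by positivity
  have hsum : (∑ i, |v i|) ≤ (m : ℝ) * R := by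
    calc ∑ i, |v i| ≤ ∑ _i : Fin m, R := Finset.sum_le_sum fun i _ => hv i
      _ = (m : ℝ) * R := by simp [Finset.sum_const, Finset.card_univ, nsmul_eq_mul]
  have hxD : ∀ (j : Fin ℓ) (e : E), |∑ i, v i * β j e i| ≤ D := fun j e =>
    (x_bound β hC j v e).trans (mul_le_mul_of_nonneg_right hsum h0C)
  have t1 : |∑ k, (∑ i, σ i k * v i) ^ 2| ≤ (∑ k, (∑ i, |σ i k|) ^ 2) * R ^ 2 := by
    rw [abs_of_nonneg (Finset.sum_nonneg fun k _ => sq_nonneg _), Finset.sum_mul]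
    apply Finset.sum_le_sum
    intro k _
    have hk : |∑ i, σ i k * v i| ≤ (∑ i, |σ i k|) * R := by
      calc |∑ i, σ i k * v i| ≤ ∑ i, |σ i k * v i| := Finset.abs_sum_le_sum_abs _ _
        _ ≤ ∑ i, |σ i k| * R := Finset.sum_le_sum fun i _ => by
            rw [abs_mul]; exact mul_le_mul_of_nonneg_left (hv i) (abs_nonneg _)
        _ = (∑ i, |σ i k|) * R := by rw [Finset.sum_mul]
    calc (∑ i, σ i k * v i) ^ 2 = |∑ i, σ i k * v i| ^ 2 := (sq_abs _).symm
      _ ≤ ((∑ i, |σ i k|) * R) ^ 2 := pow_le_pow_left₀ (abs_nonneg _) hk 2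
      _ = (∑ i, |σ i k|) ^ 2 * R ^ 2 := by ring
  have t2 : |2 * ∑ i, μ i * v i| ≤ 2 * (∑ i, |μ i|) * R := by
    rw [abs_mul, abs_two, mul_assoc]
    apply mul_le_mul_of_nonneg_left _ (by norm_num : (0:ℝ) ≤ 2)
    calc |∑ i, μ i * v i| ≤ ∑ i, |μ i * v i| := Finset.abs_sum_le_sum_abs _ _
      _ ≤ ∑ i, |μ i| * R := Finset.sum_le_sum fun i _ => by
          rw [abs_mul]; exact mul_le_mul_of_nonneg_left (hv i) (abs_nonneg _)
      _ = (∑ i, |μ i|) * R := by rw [Finset.sum_mul]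
  have t3 : |∑ j, ∫ e, ((max (1 + ∑ i, v i * β j e i) 0) ^ 2 - 1 - 2 * ∑ i, v i * β j e i) ∂(ν j)|
      ≤ ((1 + D) ^ 2 + 1 + 2 * D) * ∑ j, (ν j Set.univ).toReal := by
    calc |∑ j, ∫ e, ((max (1 + ∑ i, v i * β j e i) 0) ^ 2 - 1 - 2 * ∑ i, v i * β j e i) ∂(ν j)|
        ≤ ∑ j, |∫ e, ((max (1 + ∑ i, v i * β j e i) 0) ^ 2 - 1 - 2 * ∑ i, v i * β j e i) ∂(ν j)| :=
          Finset.abs_sum_le_sum_abs _ _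
      _ ≤ ∑ j, ((1 + D) ^ 2 + 1 + 2 * D) * (ν j Set.univ).toReal := by
          apply Finset.sum_le_sum
          intro j _
          have := norm_integral_le_of_norm_le_const (μ := ν j) (C := (1 + D) ^ 2 + 1 + 2 * D)
            (Filter.Eventually.of_forall fun e => by
              rw [Real.norm_eq_abs]
              exact pt_f1_bound _ _ (hxD j e) hD)
          simpa [Real.norm_eq_abs, measureReal_def] using this
      _ = ((1 + D) ^ 2 + 1 + 2 * D) * ∑ j, (ν j Set.univ).toReal := by rw [Finset.mul_sum]
  unfold Af
  calc |∑ k, (∑ i, σ i k * v i) ^ 2 + 2 * ∑ i, μ i * v i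
        + ∑ j, ∫ e, ((max (1 + ∑ i, v i * β j e i) 0) ^ 2 - 1 - 2 * ∑ i, v i * β j e i) ∂(ν j)|
      ≤ |∑ k, (∑ i, σ i k * v i) ^ 2| + |2 * ∑ i, μ i * v i|
        + |∑ j, ∫ e, ((max (1 + ∑ i, v i * β j e i) 0) ^ 2 - 1 - 2 * ∑ i, v i * β j e i) ∂(ν j)| :=
        abs_add_three _ _ _
    _ ≤ _ := by
        apply add_le_add (add_le_add t1 t2) t3

lemma Bf_bound (hβm : ∀ j i, Measurable fun e => β j e i)
    (hC : ∀ j e i, |β j e i| ≤ C0) (h0C : 0 ≤ C0) {R : ℝ} (hR : 0 ≤ R)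
    (v : Fin m → ℝ) (hv : ∀ i, |v i| ≤ R) :
    |Bf ν β v| ≤ (1 + (m : ℝ) * R * C0) ^ 2 * ∑ j, (ν j Set.univ).toReal := by
  set D := (m : ℝ) * R * C0 with hDdef
  have hD : 0 ≤ D := by positivity
  have hsum : (∑ i, |v i|) ≤ (m : ℝ) * R := by
    calc ∑ i, |v i| ≤ ∑ _i : Fin m, R := Finset.sum_le_sum fun i _ => hv i
      _ = (m : ℝ) * R := by simp [Finset.sum_const, Finset.card_univ, nsmul_eq_mul]
  have hxD : ∀ (j : Fin ℓ) (e : E), |∑ i, v i * β j e i| ≤ D := fun j e =>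
    (x_bound β hC j v e).trans (mul_le_mul_of_nonneg_right hsum h0C)
  unfold Bf
  calc |∑ j, ∫ e, (max (-(1 + ∑ i, v i * β j e i)) 0) ^ 2 ∂(ν j)|
      ≤ ∑ j, |∫ e, (max (-(1 + ∑ i, v i * β j e i)) 0) ^ 2 ∂(ν j)| :=
        Finset.abs_sum_le_sum_abs _ _
    _ ≤ ∑ j, (1 + D) ^ 2 * (ν j Set.univ).toReal := by
        apply Finset.sum_le_sum
        intro j _
        have := norm_integral_le_of_norm_le_const (μ := ν j) (C := (1 + D) ^ 2)
          (Filter.Eventually.of_forall fun e => by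
            rw [Real.norm_eq_abs]
            exact pt_f2_bound _ _ (hxD j e) hD)
        simpa [Real.norm_eq_abs, measureReal_def] using this
    _ = (1 + D) ^ 2 * ∑ j, (ν j Set.univ).toReal := by rw [Finset.mul_sum]

lemma Hplus_global_lb (hβm : ∀ j i, Measurable fun e => β j e i)
    (hC : ∀ j e i, |β j e i| ≤ C0) (h0C : 0 ≤ C0) {δ : ℝ} (hδ : 0 < δ)
    (hellA : ∀ v : Fin m → ℝ, δ * ∑ i, v i ^ 2
      ≤ ∑ k, (∑ i, σ i k * v i) ^ 2 + ∑ j, ∫ e, (∑ i, v i * β j e i)^2 ∂(ν j))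
    {a b Pp Pm : ℝ} (ha : 0 < a) (haPp : a ≤ Pp) (haPm : a ≤ Pm)
    (hPpb : Pp ≤ b) (v : Fin m → ℝ) :
    a * δ / 2 * (∑ i, v i ^ 2) - 2 * b ^ 2 / (a * δ) * (∑ i, μ i ^ 2)
      ≤ Hplus μ σ ν β v Pp Pm := by
  have hPp : 0 < Pp := lt_of_lt_of_le ha haPp
  have hPm : 0 < Pm := lt_of_lt_of_le ha haPm
  have hb : 0 < b := lt_of_lt_of_le hPp hPpb
  have h1 := Hplus_ge μ σ ν β hβm hC h0C v hPp hPm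
  have hmin : a ≤ min Pp Pm := le_min haPp haPm
  have hQ : 0 ≤ δ * ∑ i, v i ^ 2 := by positivity
  have h2 : a * (δ * ∑ i, v i ^ 2)
      ≤ min Pp Pm * (∑ k, (∑ i, σ i k * v i) ^ 2 + ∑ j, ∫ e, (∑ i, v i * β j e i)^2 ∂(ν j)) := by
    calc a * (δ * ∑ i, v i ^ 2) ≤ min Pp Pm * (δ * ∑ i, v i ^ 2) :=
          mul_le_mul_of_nonneg_right hmin hQ
      _ ≤ _ := mul_le_mul_of_nonneg_left (hellA v) (le_trans ha.le hmin)
  have h3 : -(∑ i, (a * δ / 2 * v i ^ 2 + 2 * b ^ 2 / (a * δ) * μ i ^ 2))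
      ≤ 2 * Pp * ∑ i, μ i * v i := by
    have h4 : |2 * Pp * ∑ i, μ i * v i| ≤ ∑ i, (a * δ / 2 * v i ^ 2 + 2 * b ^ 2 / (a * δ) * μ i ^ 2) := by
      rw [abs_mul]
      calc |2 * Pp| * |∑ i, μ i * v i| ≤ (2 * b) * ∑ i, |μ i| * |v i| := by
            apply mul_le_mul
            · rw [abs_of_pos (by linarith)]; linarith
            · calc |∑ i, μ i * v i| ≤ ∑ i, |μ i * v i| := Finset.abs_sum_le_sum_abs _ _
                _ = ∑ i, |μ i| * |v i| := Finset.sum_congr rfl fun i _ => abs_mul _ _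
            · exact abs_nonneg _
            · linarith
        _ = ∑ i, 2 * b * (|μ i| * |v i|) := by rw [Finset.mul_sum]
        _ ≤ ∑ i, (a * δ / 2 * v i ^ 2 + 2 * b ^ 2 / (a * δ) * μ i ^ 2) := by
            apply Finset.sum_le_sum
            intro i _
            have had : 0 < a * δ := mul_pos ha hδ
            have e1 : v i ^ 2 = |v i| ^ 2 := (sq_abs _).symm
            have e2 : μ i ^ 2 = |μ i| ^ 2 := (sq_abs _).symm
            rw [e1, e2]
            have ht : 2 * b ^ 2 / (a * δ) * (a * δ) = 2 * b ^ 2 :=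
              div_mul_cancel₀ _ (ne_of_gt had)
            nlinarith [sq_nonneg (a * δ * |v i| - 2 * b * |μ i|), ht, had,
              mul_nonneg (abs_nonneg (μ i)) (abs_nonneg (v i)), sq_nonneg (|μ i|)]
    have := (abs_le.mp h4).1
    linarith
  rw [Finset.sum_add_distrib, ← Finset.mul_sum, ← Finset.mul_sum] at h3
  have hXX : a * (δ * ∑ i, v i ^ 2) = 2 * (a * δ / 2 * ∑ i, v i ^ 2) := by ring
  linarith [h1, h2, h3, hXX]

end Aux4

set_option maxHeartbeats 2000000 in
/-- `H*₊` and `H*₋` are genuinely (finitely) defined on `(0,∞)²` and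
locally Lipschitz there. -/
theorem stmt11 {E : Type} [MeasurableSpace E] {m n ℓ : ℕ}
    (hm : 0 < m) (hn : 0 < n) (hl : 0 < ℓ)
    (μ : Fin m → ℝ) (σ : Matrix (Fin m) (Fin n) ℝ)
    (ν : Fin ℓ → Measure E) [∀ j, IsFiniteMeasure (ν j)]
    (β : Fin ℓ → E → Fin m → ℝ)
    (hβmeas : ∀ j, Measurable (β j))
    (hβbd : ∃ C, ∀ j e i, |β j e i| ≤ C)
    (δ : ℝ) (hδ : 0 < δ)
    (hell : ∀ v : Fin m → ℝ,
      δ * ∑ i, v i ^ 2 ≤ ∑ i, ∑ k, v i * SigmaMat σ ν β i k * v k) :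
    (∀ Pp Pm : ℝ, 0 < Pp → 0 < Pm →
      BddBelow ((fun v => Hplus μ σ ν β v Pp Pm) '' {v : Fin m → ℝ | ∀ i, 0 ≤ v i}) ∧
      BddBelow ((fun v => Hminus μ σ ν β v Pp Pm) '' {v : Fin m → ℝ | ∀ i, 0 ≤ v i})) ∧
    (∀ K : Set (ℝ × ℝ), K ⊆ Ioi (0:ℝ) ×ˢ Ioi (0:ℝ) → IsCompact K →
      ∃ L > (0:ℝ), ∀ P ∈ K, ∀ P' ∈ K,
        |HstarPlus μ σ ν β P.1 P.2 - HstarPlus μ σ ν β P'.1 P'.2| ≤ L * ‖P - P'‖ ∧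
        |HstarMinus μ σ ν β P.1 P.2 - HstarMinus μ σ ν β P'.1 P'.2| ≤ L * ‖P - P'‖) := by
  obtain ⟨C, hCb⟩ := hβbd
  have h0C : (0:ℝ) ≤ max C 0 := le_max_right _ _
  set C0 : ℝ := max C 0 with hC0def
  have hC : ∀ j e i, |β j e i| ≤ C0 := fun j e i => (hCb j e i).trans (le_max_left _ _)
  have hβm : ∀ j i, Measurable fun e => β j e i :=
    fun j i => (measurable_pi_apply i).comp (hβmeas j)
  have hellA : ∀ v : Fin m → ℝ, δ * ∑ i, v i ^ 2
      ≤ ∑ k, (∑ i, σ i k * v i) ^ 2 + ∑ j, ∫ e, (∑ i, v i * β j e i) ^ 2 ∂(ν j) := by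
    intro v
    have h := hell v
    rwa [quadform_eq σ ν β hβm hC h0C v] at h
  have hβm' : ∀ j i, Measurable fun e => -(β j e i) := fun j i => (hβm j i).neg
  have hC' : ∀ j e i, |(-(β j e i))| ≤ C0 := fun j e i => by
    rw [abs_neg]; exact hC j e i
  have hellA' : ∀ v : Fin m → ℝ, δ * ∑ i, v i ^ 2
      ≤ ∑ k, (∑ i, σ i k * v i) ^ 2 + ∑ j, ∫ e, (∑ i, v i * -(β j e i)) ^ 2 ∂(ν j) := by
    intro v
    have h := hellA v
    have heq : ∀ j : Fin ℓ, (∫ e, (∑ i, v i * -(β j e i)) ^ 2 ∂(ν j))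
        = ∫ e, (∑ i, v i * β j e i) ^ 2 ∂(ν j) := by
      intro j
      refine integral_congr_ae (Filter.Eventually.of_forall fun e => ?_)
      have hs : ∑ i, v i * -(β j e i) = -∑ i, v i * β j e i := by
        rw [← Finset.sum_neg_distrib]
        exact Finset.sum_congr rfl fun i _ => by ring
      simp only [hs, neg_sq]
    rw [Finset.sum_congr rfl fun j _ => heq j]
    exact h
  have hMeq : ∀ (v : Fin m → ℝ) (Pp Pm : ℝ), Hminus μ σ ν β v Pp Pm
      = Hplus (fun i => -μ i) σ ν (fun j e i => -(β j e i)) v Pm Pp :=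
    fun v Pp Pm => Hminus_eq_Hplus μ σ ν β v Pp Pm
  constructor
  · intro Pp Pm hPp hPm
    have hmin : 0 < min Pp Pm := lt_min hPp hPm
    constructor
    · refine ⟨-(2 * (max Pp Pm) ^ 2 / (min Pp Pm * δ) * ∑ i, μ i ^ 2), ?_⟩
      rintro y ⟨v, hv, rfl⟩
      have hlb := Hplus_global_lb μ σ ν β hβm hC h0C hδ hellA hmin
        (min_le_left Pp Pm) (min_le_right Pp Pm) (le_max_left Pp Pm) v
      have hnn : 0 ≤ min Pp Pm * δ / 2 * ∑ i, v i ^ 2 := by positivity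
      simp only
      linarith
    · refine ⟨-(2 * (max Pp Pm) ^ 2 / (min Pp Pm * δ) * ∑ i, (-μ i) ^ 2), ?_⟩
      rintro y ⟨v, hv, rfl⟩
      have hlb := Hplus_global_lb (fun i => -μ i) σ ν (fun j e i => -(β j e i))
        hβm' hC' h0C hδ hellA' hmin
        (min_le_right Pp Pm) (min_le_left Pp Pm) (le_max_right Pp Pm) v
      have hnn : 0 ≤ min Pp Pm * δ / 2 * ∑ i, v i ^ 2 := by positivity
      simp only
      rw [hMeq v Pp Pm]
      linarith
  · intro K hK hKc
    rcases K.eq_empty_or_nonempty with rfl | hKne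
    · exact ⟨1, one_pos, fun P hP => absurd hP (notMem_empty P)⟩
    obtain ⟨p₀, hp₀K, hp₀'⟩ := hKc.exists_isMinOn hKne
      ((continuous_fst.min continuous_snd).continuousOn)
    obtain ⟨p₁, hp₁K, hp₁'⟩ := hKc.exists_isMaxOn hKne
      ((continuous_fst.max continuous_snd).continuousOn)
    have hp₀ : ∀ P ∈ K, min p₀.1 p₀.2 ≤ min P.1 P.2 := fun P hP => hp₀' hP
    have hp₁ : ∀ P ∈ K, max P.1 P.2 ≤ max p₁.1 p₁.2 := fun P hP => hp₁' hP
    set a : ℝ := min p₀.1 p₀.2 with hadef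
    set b : ℝ := max p₁.1 p₁.2 with hbdef
    have ha : 0 < a := lt_min (hK hp₀K).1 (hK hp₀K).2
    have hbounds : ∀ P ∈ K, a ≤ P.1 ∧ a ≤ P.2 ∧ P.1 ≤ b ∧ P.2 ≤ b := by
      intro P hP
      have h1 := hp₀ P hP
      have h2 := hp₁ P hP
      exact ⟨le_trans h1 (min_le_left _ _), le_trans h1 (min_le_right _ _),
        le_trans (le_max_left _ _) h2, le_trans (le_max_right _ _) h2⟩
    have hb : 0 < b := lt_of_lt_of_le ha
      (le_trans (hbounds p₀ hp₀K).1 (hbounds p₀ hp₀K).2.2.1)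
    set c1 : ℝ := 2 * b ^ 2 / (a * δ) * ∑ i, μ i ^ 2 with hc1def
    have hc1 : 0 ≤ c1 := by positivity
    set R : ℝ := Real.sqrt (2 * (c1 + 1) / (a * δ)) with hRdef
    have hR : 0 ≤ R := Real.sqrt_nonneg _
    have hR2 : R ^ 2 = 2 * (c1 + 1) / (a * δ) := by
      rw [hRdef, sq, Real.mul_self_sqrt (by positivity)]
    have hR2' : a * δ / 2 * R ^ 2 = c1 + 1 := by
      rw [hR2]; field_simp
    set MA : ℝ := (∑ k, (∑ i, |σ i k|) ^ 2) * R ^ 2 + 2 * (∑ i, |μ i|) * R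
      + ((1 + (m : ℝ) * R * C0) ^ 2 + 1 + 2 * ((m : ℝ) * R * C0))
        * ∑ j, (ν j Set.univ).toReal with hMAdef
    set MB : ℝ := (1 + (m : ℝ) * R * C0) ^ 2 * ∑ j, (ν j Set.univ).toReal with hMBdef
    have hMA : 0 ≤ MA := by
      rw [hMAdef]
      have h1 : 0 ≤ ∑ j, (ν j Set.univ).toReal :=
        Finset.sum_nonneg fun j _ => ENNReal.toReal_nonneg
      have h2 : 0 ≤ ∑ i, |μ i| := Finset.sum_nonneg fun i _ => abs_nonneg _
      have h3 : 0 ≤ ∑ k, (∑ i, |σ i k|) ^ 2 := Finset.sum_nonneg fun k _ => sq_nonneg _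
      have h4 : 0 ≤ (m : ℝ) * R * C0 := by positivity
      positivity
    have hMB : 0 ≤ MB := by
      rw [hMBdef]
      have h1 : 0 ≤ ∑ j, (ν j Set.univ).toReal :=
        Finset.sum_nonneg fun j _ => ENNReal.toReal_nonneg
      positivity
    set T : Set (Fin m → ℝ) := {v | (∀ i, 0 ≤ v i) ∧ ∑ i, v i ^ 2 ≤ R ^ 2} with hTdef
    have hT0 : (fun _ => (0:ℝ)) ∈ T := by
      rw [hTdef, Set.mem_setOf_eq]
      refine ⟨fun i => le_refl 0, ?_⟩
      simp
      positivity
    have hTS : T ⊆ {v : Fin m → ℝ | ∀ i, 0 ≤ v i} := by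
      intro v hv
      rw [hTdef, Set.mem_setOf_eq] at hv
      exact hv.1
    have hvT : ∀ v ∈ T, ∀ i, |v i| ≤ R := by
      intro v hv i
      rw [hTdef, Set.mem_setOf_eq] at hv
      have h1 : v i ^ 2 ≤ ∑ i', v i' ^ 2 :=
        Finset.single_le_sum (fun i' _ => sq_nonneg (v i')) (Finset.mem_univ i)
      have h2 : v i ^ 2 ≤ R ^ 2 := le_trans h1 hv.2
      nlinarith [sq_abs (v i), abs_nonneg (v i)]
    -- key estimate, uniform in the data (μ0, β0)
    have key : ∀ (μ0 : Fin m → ℝ) (β0 : Fin ℓ → E → Fin m → ℝ)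
        (hβm0 : ∀ j i, Measurable fun e => β0 j e i)
        (hC0' : ∀ j e i, |β0 j e i| ≤ C0)
        (hellA0 : ∀ v : Fin m → ℝ, δ * ∑ i, v i ^ 2
          ≤ ∑ k, (∑ i, σ i k * v i) ^ 2 + ∑ j, ∫ e, (∑ i, v i * β0 j e i) ^ 2 ∂(ν j))
        (hμ0a : ∑ i, |μ0 i| = ∑ i, |μ i|) (hμ0s : ∑ i, μ0 i ^ 2 = ∑ i, μ i ^ 2)
        (Qp Qm Qp' Qm' : ℝ), a ≤ Qp → Qp ≤ b → a ≤ Qm → Qm ≤ b →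
          a ≤ Qp' → Qp' ≤ b → a ≤ Qm' → Qm' ≤ b →
        |sInf ((fun v => Hplus μ0 σ ν β0 v Qp Qm) '' {v : Fin m → ℝ | ∀ i, 0 ≤ v i})
          - sInf ((fun v => Hplus μ0 σ ν β0 v Qp' Qm') '' {v : Fin m → ℝ | ∀ i, 0 ≤ v i})|
          ≤ (MA + MB) * max |Qp - Qp'| |Qm - Qm'| := by
      intro μ0 β0 hβm0 hC0' hellA0 hμ0a hμ0s Qp Qm Qp' Qm' h1 h2 h3 h4 h5 h6 h7 h8
      have hglb : ∀ (Xp Xm : ℝ), a ≤ Xp → Xp ≤ b → a ≤ Xm → ∀ v : Fin m → ℝ,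
          a * δ / 2 * (∑ i, v i ^ 2) - c1 ≤ Hplus μ0 σ ν β0 v Xp Xm := by
        intro Xp Xm hx1 hx2 hx3 v
        have := Hplus_global_lb μ0 σ ν β0 hβm0 hC0' h0C hδ hellA0 ha hx1 hx3 hx2 v
        rw [hμ0s] at this
        exact this
      have hbdd : ∀ (Xp Xm : ℝ), a ≤ Xp → Xp ≤ b → a ≤ Xm →
          BddBelow ((fun v => Hplus μ0 σ ν β0 v Xp Xm) '' {v : Fin m → ℝ | ∀ i, 0 ≤ v i}) := by
        intro Xp Xm hx1 hx2 hx3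
        refine ⟨-c1, ?_⟩
        rintro y ⟨v, hv, rfl⟩
        have := hglb Xp Xm hx1 hx2 hx3 v
        have hnn : 0 ≤ a * δ / 2 * ∑ i, v i ^ 2 := by positivity
        simp only
        linarith
      have hdom : ∀ (Xp Xm : ℝ), a ≤ Xp → Xp ≤ b → a ≤ Xm →
          ∀ v ∈ {v : Fin m → ℝ | ∀ i, 0 ≤ v i}, ∃ u ∈ T,
            Hplus μ0 σ ν β0 u Xp Xm ≤ Hplus μ0 σ ν β0 v Xp Xm := by
        intro Xp Xm hx1 hx2 hx3 v hv
        by_cases h : ∑ i, v i ^ 2 ≤ R ^ 2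
        · exact ⟨v, ⟨hv, h⟩, le_refl _⟩
        · push_neg at h
          refine ⟨fun _ => 0, hT0, ?_⟩
          rw [Hplus_zero]
          have hg := hglb Xp Xm hx1 hx2 hx3 v
          have h9 : a * δ / 2 * R ^ 2 ≤ a * δ / 2 * ∑ i, v i ^ 2 :=
            mul_le_mul_of_nonneg_left h.le (by positivity)
          linarith
      have htrunc : ∀ (Xp Xm : ℝ), a ≤ Xp → Xp ≤ b → a ≤ Xm →
          sInf ((fun v => Hplus μ0 σ ν β0 v Xp Xm) '' {v : Fin m → ℝ | ∀ i, 0 ≤ v i})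
            = sInf ((fun v => Hplus μ0 σ ν β0 v Xp Xm) '' T) := by
        intro Xp Xm hx1 hx2 hx3
        exact sInf_image_trunc _ _ T hTS (hbdd Xp Xm hx1 hx2 hx3) ⟨_, hT0⟩
          (hdom Xp Xm hx1 hx2 hx3)
      rw [htrunc Qp Qm h1 h2 h3, htrunc Qp' Qm' h5 h6 h7]
      apply abs_sInf_sub_sInf_le _ _ T ⟨_, hT0⟩
        ((hbdd Qp Qm h1 h2 h3).mono (image_mono hTS))
        ((hbdd Qp' Qm' h5 h6 h7).mono (image_mono hTS))
      intro v hv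
      have hAf : |Af μ0 σ ν β0 v| ≤ MA := by
        have := Af_bound μ0 σ ν β0 hβm0 hC0' h0C hR v (hvT v hv)
        rw [hμ0a] at this
        exact this
      have hBf : |Bf ν β0 v| ≤ MB := Bf_bound ν β0 hβm0 hC0' h0C hR v (hvT v hv)
      rw [Hplus_decomp μ0 σ ν β0 hβm0 hC0' h0C v Qp Qm,
        Hplus_decomp μ0 σ ν β0 hβm0 hC0' h0C v Qp' Qm']
      have heq : Qp * Af μ0 σ ν β0 v + Qm * Bf ν β0 v
          - (Qp' * Af μ0 σ ν β0 v + Qm' * Bf ν β0 v)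
          = (Qp - Qp') * Af μ0 σ ν β0 v + (Qm - Qm') * Bf ν β0 v := by ring
      rw [heq]
      have hmax : 0 ≤ max |Qp - Qp'| |Qm - Qm'| := le_trans (abs_nonneg _) (le_max_left _ _)
      calc |(Qp - Qp') * Af μ0 σ ν β0 v + (Qm - Qm') * Bf ν β0 v|
          ≤ |(Qp - Qp') * Af μ0 σ ν β0 v| + |(Qm - Qm') * Bf ν β0 v| := abs_add_le _ _
        _ = |Qp - Qp'| * |Af μ0 σ ν β0 v| + |Qm - Qm'| * |Bf ν β0 v| := by
            rw [abs_mul, abs_mul]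
        _ ≤ max |Qp - Qp'| |Qm - Qm'| * MA + max |Qp - Qp'| |Qm - Qm'| * MB :=
            add_le_add
              (mul_le_mul (le_max_left _ _) hAf (abs_nonneg _) hmax)
              (mul_le_mul (le_max_right _ _) hBf (abs_nonneg _) hmax)
        _ = (MA + MB) * max |Qp - Qp'| |Qm - Qm'| := by ring
    refine ⟨MA + MB + 1, by positivity, ?_⟩
    intro P hP P' hP'
    obtain ⟨hPa1, hPa2, hPb1, hPb2⟩ := hbounds P hP
    obtain ⟨hPa1', hPa2', hPb1', hPb2'⟩ := hbounds P' hP'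
    have hnorm : max |P.1 - P'.1| |P.2 - P'.2| ≤ ‖P - P'‖ := by
      apply max_le
      · have := norm_fst_le (P - P')
        simpa [Prod.fst_sub, Real.norm_eq_abs] using this
      · have := norm_snd_le (P - P')
        simpa [Prod.snd_sub, Real.norm_eq_abs] using this
    have hnn : (0:ℝ) ≤ ‖P - P'‖ := norm_nonneg _
    have hfinal : (MA + MB) * max |P.1 - P'.1| |P.2 - P'.2| ≤ (MA + MB + 1) * ‖P - P'‖ :=
      mul_le_mul (by linarith) hnorm (le_trans (abs_nonneg _) (le_max_left _ _)) (by linarith)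
    constructor
    · have hk := key μ β hβm hC hellA rfl rfl P.1 P.2 P'.1 P'.2
        hPa1 hPb1 hPa2 hPb2 hPa1' hPb1' hPa2' hPb2'
      unfold HstarPlus
      exact le_trans hk hfinal
    · have hfun : ∀ Pp Pm : ℝ, (fun v => Hminus μ σ ν β v Pp Pm)
          = (fun v => Hplus (fun i => -μ i) σ ν (fun j e i => -(β j e i)) v Pm Pp) :=
        fun Pp Pm => funext fun v => hMeq v Pp Pm
      unfold HstarMinus
      rw [hfun P.1 P.2, hfun P'.1 P'.2]
      have hk2 := key (fun i => -μ i) (fun j e i => -(β j e i)) hβm' hC' hellA'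
        (by simp [abs_neg]) (by simp [neg_sq]) P.2 P.1 P'.2 P'.1
        hPa2 hPb2 hPa1 hPb1 hPa2' hPb2' hPa1' hPb1'
      rw [max_comm] at hk2
      exact le_trans hk2 hfinal
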